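/- Let K > 1 be an integer, let b_0, b_1, b_2 be nonnegative reals, and let x_1, x_2 be arbitrary reals. Then there exist reals y_1 and y_2 such that b_0·b_1·f(x_1, y_1) + b_0·b_2·f(x_2, y_2) + b_1·b_2·f(x_2 − x_1, y_2 − y_1) ≤ 0. -/

import Mathlib

open Real Finset

/-- `f(x, y) = ∑_{k=0}^{K−1} cos(y − 2kx)`. -/
noncomputable def f (K : ℕ) (x y : ℝ) : ℝ :=
  ∑ k ∈ Finset.range K, Real.cos (y - 2 * (k : ℝ) * x)

lemma f_pi (K : ℕ) (x : ℝ) : f K x π = - f K x 0 := by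
  simp [f, Real.cos_pi_sub, zero_sub, Real.cos_neg, ← Finset.sum_neg_distrib]

lemma f_two_pi (K : ℕ) (x : ℝ) : f K x (2 * π) = f K x 0 := by
  simp [f, Real.cos_sub, Real.cos_two_pi, Real.sin_two_pi, zero_sub, Real.cos_neg]

/-- for `K > 1`, nonnegative `b₀, b₁, b₂`, and arbitrary reals `x₁, x₂`,
there exist `y₁, y₂` such that
`b₀b₁·f(x₁, y₁) + b₀b₂·f(x₂, y₂) + b₁b₂·f(x₂ − x₁, y₂ − y₁) ≤ 0`. -/
theorem stmt_13 (K : ℕ) (hK : 1 < K)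
    (b₀ b₁ b₂ : ℝ) (hb₀ : 0 ≤ b₀) (hb₁ : 0 ≤ b₁) (hb₂ : 0 ≤ b₂)
    (x₁ x₂ : ℝ) :
    ∃ y₁ y₂ : ℝ,
      b₀ * b₁ * f K x₁ y₁ + b₀ * b₂ * f K x₂ y₂ +
        b₁ * b₂ * f K (x₂ - x₁) (y₂ - y₁) ≤ 0 := by
  by_contra h
  push_neg at h
  have h1 := h 0 0
  have h2 := h 0 π
  have h3 := h π π
  have h4 := h π (2 * π)
  rw [sub_self] at h1
  have e1 : (π : ℝ) - 0 = π := by ring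
  have e2 : (π : ℝ) - π = 0 := by ring
  have e3 : 2 * π - π = π := by ring
  rw [e1, f_pi, f_pi] at h2
  rw [e2, f_pi, f_pi] at h3
  rw [e3, f_pi, f_pi, f_two_pi] at h4
  linarith
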